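/- For every prime p ≥ 5, there exists a set A ⊆ 𝔽_p such that |A| = (p − 1)/2, 1 ∉ A + A, and 1 ∉ A·A. -/

import Mathlib

open scoped Pointwise

open Finset

namespace AvoidingSetAux

variable {p : ℕ} [Fact p.Prime]

/-- The function `θ(x) = x + 1/(1-x) + (x-1)/x - 3/2`, invariant under
`x ↦ 1/(1-x)` and anti-invariant under `x ↦ 1-x` and `x ↦ x⁻¹`. -/
noncomputable def th (p : ℕ) [Fact p.Prime] (x : ZMod p) : ZMod p :=
  x + (1 - x)⁻¹ + (x - 1) * x⁻¹ - 3 / 2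

/-- A "half" of the nonzero elements: one of `z, -z` for each pair. -/
def Hf (p : ℕ) [Fact p.Prime] : Finset (ZMod p) :=
  Finset.univ.filter (fun z => z ≠ 0 ∧ 2 * z.val < p)

lemma mem_Hf {z : ZMod p} : z ∈ Hf p ↔ z ≠ 0 ∧ 2 * z.val < p := by
  simp [Hf]

lemma natCast_ne (hp : 5 ≤ p) {n : ℕ} (hn : 0 < n) (hn4 : n ≤ 4) :
    ((n : ZMod p)) ≠ 0 := by
  rw [Ne, ZMod.natCast_eq_zero_iff]
  intro h
  have := Nat.le_of_dvd hn h
  omega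

lemma two_ne (hp : 5 ≤ p) : (2 : ZMod p) ≠ 0 := by
  have := natCast_ne (p := p) hp (n := 2) (by norm_num) (by norm_num)
  simpa using this

lemma three_ne (hp : 5 ≤ p) : (3 : ZMod p) ≠ 0 := by
  have := natCast_ne (p := p) hp (n := 3) (by norm_num) (by norm_num)
  simpa using this

lemma odd_p (hp : 5 ≤ p) : p % 2 = 1 := by
  have hprime : p.Prime := Fact.out
  rcases hprime.eq_two_or_odd with h | h
  · omega
  · exact h

lemma not_both (hp : 5 ≤ p) {z : ZMod p} (hz : z ∈ Hf p) : -z ∉ Hf p := by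
  rw [mem_Hf] at hz ⊢
  rintro ⟨h1, h2⟩
  have hv : z.val < p := z.val_lt
  rw [ZMod.neg_val, if_neg hz.1] at h2
  omega

lemma neg_mem (hp : 5 ≤ p) {z : ZMod p} (hz0 : z ≠ 0) (hz : z ∉ Hf p) :
    -z ∈ Hf p := by
  rw [mem_Hf] at hz ⊢
  refine ⟨neg_ne_zero.mpr hz0, ?_⟩
  rw [ZMod.neg_val, if_neg hz0]
  have hv : z.val < p := z.val_lt
  have hv0 : z.val ≠ 0 := fun h => hz0 ((ZMod.val_eq_zero z).mp h)
  have hodd := odd_p (p := p) hp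
  push_neg at hz
  have h2v := hz hz0
  omega

lemma th_one_sub (hp : 5 ≤ p) {x : ZMod p} (h0 : x ≠ 0) (h1 : x ≠ 1) :
    th p (1 - x) = - th p x := by
  have h2 : (2 : ZMod p) ≠ 0 := two_ne hp
  have hs : (1 : ZMod p) - x ≠ 0 := sub_ne_zero.mpr (Ne.symm h1)
  have hs' : x - 1 ≠ 0 := sub_ne_zero.mpr h1
  have e : (1 : ZMod p) - (1 - x) = x := by ring
  unfold th
  rw [e]
  field_simp
  ring

lemma th_inv (hp : 5 ≤ p) {x : ZMod p} (h0 : x ≠ 0) (h1 : x ≠ 1) :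
    th p x⁻¹ = - th p x := by
  have h2 : (2 : ZMod p) ≠ 0 := two_ne hp
  have hs : (1 : ZMod p) - x ≠ 0 := sub_ne_zero.mpr (Ne.symm h1)
  have hinv : x⁻¹ ≠ 0 := inv_ne_zero h0
  have hinv1 : (1 : ZMod p) - x⁻¹ ≠ 0 := by
    rw [sub_ne_zero]
    intro h
    exact h1 (by rw [← inv_inv x, ← h, inv_one])
  have hs2 : x - 1 ≠ 0 := sub_ne_zero.mpr h1
  have hs3 : (-1 : ZMod p) + x ≠ 0 := by
    intro h; exact hs2 (by linear_combination h)
  unfold th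
  field_simp
  ring

lemma th_factor (hp : 5 ≤ p) {x : ZMod p} (h0 : x ≠ 0) (h1 : x ≠ 1) :
    (2 * x * (1 - x)) * th p x = -((x + 1) * (x - 2) * (2 * x - 1)) := by
  have h2 : (2 : ZMod p) ≠ 0 := two_ne hp
  have hs : (1 : ZMod p) - x ≠ 0 := sub_ne_zero.mpr (Ne.symm h1)
  unfold th
  field_simp
  ring

lemma th_ne_zero (hp : 5 ≤ p) {x : ZMod p} (h0 : x ≠ 0) (h1 : x ≠ 1)
    (h2x : x ≠ 2) (hm1 : x ≠ -1) (hhalf : x ≠ 2⁻¹) : th p x ≠ 0 := by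
  intro h
  have hf := th_factor hp h0 h1
  rw [h, mul_zero] at hf
  have := hf.symm
  rw [neg_eq_zero] at this
  rcases mul_eq_zero.mp this with h' | h'
  · rcases mul_eq_zero.mp h' with h'' | h''
    · exact hm1 (by linear_combination h'')
    · exact h2x (by linear_combination h'')
  · apply hhalf
    have : (2 : ZMod p) * x = 1 := by linear_combination h'
    exact eq_inv_of_mul_eq_one_left (by linear_combination this)

/-- The five excluded elements. -/
def E (p : ℕ) [Fact p.Prime] : Finset (ZMod p) := {0, 1, 2, -1, 2⁻¹}

def S (p : ℕ) [Fact p.Prime] : Finset (ZMod p) := Finset.univ \ E p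

lemma mem_S {x : ZMod p} :
    x ∈ S p ↔ x ≠ 0 ∧ x ≠ 1 ∧ x ≠ 2 ∧ x ≠ -1 ∧ x ≠ 2⁻¹ := by
  simp [S, E]

lemma card_E (hp : 5 ≤ p) : (E p).card = 5 := by
  have h2 : (2 : ZMod p) ≠ 0 := two_ne hp
  have h3 : (3 : ZMod p) ≠ 0 := three_ne hp
  have key : (2 : ZMod p) * 2⁻¹ = 1 := mul_inv_cancel₀ h2
  have d01 : (0 : ZMod p) ≠ 1 := zero_ne_one
  have d02 : (0 : ZMod p) ≠ 2 := Ne.symm h2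
  have d0m : (0 : ZMod p) ≠ -1 := fun h => one_ne_zero (by linear_combination h)
  have d0h : (0 : ZMod p) ≠ 2⁻¹ := Ne.symm (inv_ne_zero h2)
  have d12 : (1 : ZMod p) ≠ 2 := fun h => one_ne_zero (by linear_combination -h)
  have d1m : (1 : ZMod p) ≠ -1 := fun h => h2 (by linear_combination h)
  have d1h : (1 : ZMod p) ≠ 2⁻¹ := fun h => one_ne_zero (by linear_combination (2:ZMod p)*h + key)
  have d2m : (2 : ZMod p) ≠ -1 := fun h => h3 (by linear_combination h)
  have d2h : (2 : ZMod p) ≠ 2⁻¹ := fun h => h3 (by linear_combination (2:ZMod p)*h + key)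
  have dmh : (-1 : ZMod p) ≠ 2⁻¹ := fun h => h3 (by linear_combination (-2:ZMod p)*h - key)
  unfold E
  rw [card_insert_of_notMem (by simp [d01, d02, d0m, d0h]),
    card_insert_of_notMem (by simp [d12, d1m, d1h]),
    card_insert_of_notMem (by simp [d2m, d2h]),
    card_insert_of_notMem (by simp [dmh])]
  simp

lemma d12' (hp : 5 ≤ p) : (1 : ZMod p) ≠ 2 := by
  intro h
  exact one_ne_zero (show (1 : ZMod p) = 0 by linear_combination -h)

/-- `1 - x` stays in `S`. -/
lemma one_sub_mem_S (hp : 5 ≤ p) {x : ZMod p} (hx : x ∈ S p) : 1 - x ∈ S p := by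
  have h2 : (2 : ZMod p) ≠ 0 := two_ne hp
  have key : (2 : ZMod p) * 2⁻¹ = 1 := mul_inv_cancel₀ h2
  rw [mem_S] at hx ⊢
  obtain ⟨h0, h1, h2x, hm1, hhalf⟩ := hx
  refine ⟨?_, ?_, ?_, ?_, ?_⟩
  · exact sub_ne_zero.mpr (Ne.symm h1)
  · exact fun h => h0 (by linear_combination -h)
  · exact fun h => hm1 (by linear_combination -h)
  · exact fun h => h2x (by linear_combination -h)
  · exact fun h => hhalf (by linear_combination -h - key)

noncomputable def T (p : ℕ) [Fact p.Prime] : Finset (ZMod p) :=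
  (S p).filter (fun x => th p x ∈ Hf p)

noncomputable def U (p : ℕ) [Fact p.Prime] : Finset (ZMod p) :=
  (S p).filter (fun x => th p x ∉ Hf p)

lemma th_ne_zero_of_mem_S (hp : 5 ≤ p) {x : ZMod p} (hx : x ∈ S p) :
    th p x ≠ 0 := by
  rw [mem_S] at hx
  exact th_ne_zero hp hx.1 hx.2.1 hx.2.2.1 hx.2.2.2.1 hx.2.2.2.2

lemma card_T_eq_card_U (hp : 5 ≤ p) : (T p).card = (U p).card := by
  apply Finset.card_nbij' (fun x => 1 - x) (fun x => 1 - x)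
  · intro a ha
    simp only [T, mem_coe, mem_filter] at ha
    obtain ⟨haS, haH⟩ := ha
    have haS' : (1 : ZMod p) - a ∈ S p := one_sub_mem_S hp haS
    simp only [U, mem_coe, mem_filter]
    refine ⟨haS', ?_⟩
    rw [mem_S] at haS
    rw [th_one_sub hp haS.1 haS.2.1]
    exact not_both hp haH
  · intro a ha
    simp only [U, mem_coe, mem_filter] at ha
    obtain ⟨haS, haH⟩ := ha
    have haS' : (1 : ZMod p) - a ∈ S p := one_sub_mem_S hp haS
    simp only [T, mem_coe, mem_filter]
    refine ⟨haS', ?_⟩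
    have hne := th_ne_zero_of_mem_S hp haS
    rw [mem_S] at haS
    rw [th_one_sub hp haS.1 haS.2.1]
    exact neg_mem hp hne haH
  · intro a _; ring
  · intro a _; ring

lemma card_S (hp : 5 ≤ p) : (S p).card = p - 5 := by
  rw [S, card_sdiff_of_subset (subset_univ _), card_E hp, card_univ, ZMod.card]

lemma card_T (hp : 5 ≤ p) : 2 * (T p).card + 5 = p := by
  have h1 : (T p).card + (U p).card = (S p).card := by
    simp only [T, U]
    exact card_filter_add_card_filter_not _
  have h2 := card_T_eq_card_U hp
  have h3 := card_S hp
  omega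

/-- The avoiding set. -/
noncomputable def A (p : ℕ) [Fact p.Prime] : Finset (ZMod p) :=
  insert 0 (insert 2 (T p))

lemma zero_not_mem_T : (0 : ZMod p) ∉ T p := by
  simp only [T, mem_filter, mem_S]
  tauto

lemma two_not_mem_T : (2 : ZMod p) ∉ T p := by
  simp only [T, mem_filter, mem_S]
  tauto

lemma card_A (hp : 5 ≤ p) : (A p).card = (p - 1) / 2 := by
  have h2 : (2 : ZMod p) ≠ 0 := two_ne hp
  have hodd := odd_p (p := p) hp
  have hT := card_T (p := p) hp
  rw [A, card_insert_of_notMem, card_insert_of_notMem two_not_mem_T]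
  · omega
  · simp only [mem_insert]
    push_neg
    exact ⟨Ne.symm h2, zero_not_mem_T⟩

lemma mem_A {x : ZMod p} : x ∈ A p ↔ x = 0 ∨ x = 2 ∨ x ∈ T p := by
  simp [A]

lemma mem_T_conds {x : ZMod p} (hx : x ∈ T p) :
    (x ≠ 0 ∧ x ≠ 1 ∧ x ≠ 2 ∧ x ≠ -1 ∧ x ≠ 2⁻¹) ∧ th p x ∈ Hf p := by
  simp only [T, mem_filter, mem_S] at hx
  exact hx

lemma add_ne_one (hp : 5 ≤ p) {a b : ZMod p} (ha : a ∈ A p) (hb : b ∈ A p) :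
    a + b ≠ 1 := by
  have h2 : (2 : ZMod p) ≠ 0 := two_ne hp
  have h3 : (3 : ZMod p) ≠ 0 := three_ne hp
  intro hab
  rw [mem_A] at ha hb
  have key : ∀ c : ZMod p, c ∈ T p → c ≠ 1 ∧ c ≠ -1 := by
    intro c hc
    obtain ⟨⟨_, h1, _, hm1, _⟩, _⟩ := mem_T_conds hc
    exact ⟨h1, hm1⟩
  rcases ha with ha | ha | ha <;> rcases hb with hb | hb | hb <;> subst_vars
  · exact one_ne_zero (by linear_combination -hab)
  · exact d12' hp (by linear_combination -hab)
  · exact (key _ hb).1 (by linear_combination hab)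
  · exact d12' hp (by linear_combination -hab)
  · exact h3 (by linear_combination hab)
  · exact (key _ hb).2 (by linear_combination hab)
  · exact (key _ ha).1 (by linear_combination hab)
  · exact (key _ ha).2 (by linear_combination hab)
  · -- both generic
    obtain ⟨⟨ha0, ha1, _, _, _⟩, haH⟩ := mem_T_conds ha
    obtain ⟨_, hbH⟩ := mem_T_conds hb
    have hb' : b = 1 - a := by linear_combination hab
    rw [hb', th_one_sub hp ha0 ha1] at hbH
    exact not_both hp haH hbH

lemma mul_ne_one (hp : 5 ≤ p) {a b : ZMod p} (ha : a ∈ A p) (hb : b ∈ A p) :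
    a * b ≠ 1 := by
  have h2 : (2 : ZMod p) ≠ 0 := two_ne hp
  have h3 : (3 : ZMod p) ≠ 0 := three_ne hp
  intro hab
  rw [mem_A] at ha hb
  have key : ∀ c : ZMod p, c ∈ T p → c ≠ 2⁻¹ := by
    intro c hc
    obtain ⟨⟨_, _, _, _, hh⟩, _⟩ := mem_T_conds hc
    exact hh
  rcases ha with ha | ha | ha <;> rcases hb with hb | hb | hb <;> subst_vars
  · exact one_ne_zero (by linear_combination -hab)
  · exact one_ne_zero (by linear_combination -hab)
  · exact one_ne_zero (by linear_combination -hab)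
  · exact one_ne_zero (by linear_combination -hab)
  · exact h3 (by linear_combination hab)
  · exact key _ hb (eq_inv_of_mul_eq_one_left (by linear_combination hab))
  · exact one_ne_zero (by linear_combination -hab)
  · exact key _ ha (eq_inv_of_mul_eq_one_left (by linear_combination hab))
  · -- both generic
    obtain ⟨⟨ha0, ha1, _, _, _⟩, haH⟩ := mem_T_conds ha
    obtain ⟨_, hbH⟩ := mem_T_conds hb
    have hb' : b = a⁻¹ := eq_inv_of_mul_eq_one_right hab
    rw [hb', th_inv hp ha0 ha1] at hbH
    exact not_both hp haH hbH

end AvoidingSetAux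

/-- For every prime `p ≥ 5` there is `A ⊆ 𝔽_p` with `|A| = (p-1)/2`,
`1 ∉ A + A` and `1 ∉ A·A`. -/
theorem exists_large_avoiding_set (p : ℕ) [Fact p.Prime] (hp : 5 ≤ p) :
    ∃ A : Finset (ZMod p),
      A.card = (p - 1) / 2 ∧ (1 : ZMod p) ∉ A + A ∧ (1 : ZMod p) ∉ A * A := by
  refine ⟨AvoidingSetAux.A p, AvoidingSetAux.card_A hp, ?_, ?_⟩
  · intro h
    rw [Finset.mem_add] at h
    obtain ⟨a, ha, b, hb, hab⟩ := h
    exact AvoidingSetAux.add_ne_one hp ha hb hab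
  · intro h
    rw [Finset.mem_mul] at h
    obtain ⟨a, ha, b, hb, hab⟩ := h
    exact AvoidingSetAux.mul_ne_one hp ha hb hab
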